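/- arXiv:1409.2536 — 2 statements merged into one kernel-verified Lean document; each statement's English description precedes it below -/
import Mathlib

section
/- For every probability distribution P on a finite set X with |X| = a, every positive integer n and every δ > 0, the cardinality of the variance-typical set satisfies |T^n_{P,δ}| ≤ exp₂(nH(P) + K·a·δ·√n) and |T^n_{P,δ}| ≥ (1 − a/δ²)·exp₂(nH(P) − K·a·δ·√n), where K = 2 log₂(e)/e, H(P) = −Σ_x P(x) log₂ P(x), and exp₂ denotes the exponential to base 2. -/
open Matrix BigOperators Finset
open scoped Classical ComplexOrder

noncomputable section

/-- Square complex matrices of size `d` (operators on `ℂ^d`). -/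
abbrev Mat (d : ℕ) := Matrix (Fin d) (Fin d) ℂ

/-- Operators on the `n`-fold tensor power `(ℂ^d)^{⊗n}`, indexed by `Fin n → Fin d`. -/
abbrev MatPow (d n : ℕ) := Matrix (Fin n → Fin d) (Fin n → Fin d) ℂ

/-- Tensor product `A 0 ⊗ A 1 ⊗ ⋯ ⊗ A (n-1)` of a family of `d × d` matrices. -/
def tensorPow {d n : ℕ} (A : Fin n → Mat d) : MatPow d n :=
  Matrix.of fun j k => ∏ i, A i (j i) (k i)

/-- Exponential to base 2. -/
def exp2 (t : ℝ) : ℝ := (2 : ℝ) ^ t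

/-- `P` is a probability distribution on the finite set `X`. -/
def IsProbDist {X : Type*} [Fintype X] (P : X → ℝ) : Prop :=
  (∀ x, 0 ≤ P x) ∧ ∑ x, P x = 1

/-- `ρ` is a density operator (a state): positive semidefinite with trace one. -/
def IsState {ι : Type*} [Fintype ι] [DecidableEq ι] (ρ : Matrix ι ι ℂ) : Prop :=
  ρ.PosSemidef ∧ ρ.trace = 1

/-- `N(x|x^n)`: number of occurrences of the letter `x` in the sequence `xs`. -/
def countIn {X : Type*} {n : ℕ} (x : X) (xs : Fin n → X) : ℕ :=
  (Finset.univ.filter fun i => xs i = x).card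

/-- The variance-typical set `T^n_{P,δ}`. -/
def typicalSet {X : Type*} [Fintype X] (n : ℕ) (P : X → ℝ) (δ : ℝ) :
    Finset (Fin n → X) :=
  Finset.univ.filter fun xs => ∀ x : X,
    |(countIn x xs : ℝ) - n * P x| ≤ δ * Real.sqrt n * Real.sqrt (P x * (1 - P x))

/-- Product (i.i.d.) probability `P^{⊗n}(A)` of a set `A` of sequences. -/
def prodProb {X : Type*} [Fintype X] {n : ℕ} (P : X → ℝ) (A : Finset (Fin n → X)) : ℝ :=
  ∑ xs ∈ A, ∏ i, P (xs i)

/-- Shannon entropy to base 2. -/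
def shannonEntropy {X : Type*} [Fintype X] (P : X → ℝ) : ℝ :=
  -∑ x, P x * Real.logb 2 (P x)

/-- von Neumann entropy to base 2, `H(ρ) = -Tr(ρ log₂ ρ)`, via the eigenvalues. -/
def vnEntropy {d : ℕ} (ρ : Mat d) : ℝ :=
  if h : ρ.IsHermitian then -∑ i, h.eigenvalues i * Real.logb 2 (h.eigenvalues i) else 0

/-- The constant `K = 2 log₂(e) / e`. -/
def Kconst : ℝ := 2 * Real.logb 2 (Real.exp 1) / Real.exp 1

/-- A diagonalization `ρ = Σ_j R j • π j` into one-dimensional mutually orthogonal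
eigenprojectors, with eigenvalue list `R` a probability distribution. -/
def IsDiagonalization {d : ℕ} (ρ : Mat d) (R : Fin d → ℝ) (π : Fin d → Mat d) : Prop :=
  (∀ j, (π j).PosSemidef) ∧ (∀ j, π j * π j = π j) ∧ (∀ j, (π j).trace = 1) ∧
    (∀ j k, j ≠ k → π j * π k = 0) ∧ (∑ j, π j = 1) ∧
    ρ = ∑ j, (R j : ℂ) • π j ∧ IsProbDist R

/-- The variance-typical projector `Π^n_{ρ,δ}` of a state with fixed diagonalization
`(R, π)`. -/
def typicalProj {d : ℕ} (n : ℕ) (R : Fin d → ℝ) (π : Fin d → Mat d) (δ : ℝ) : MatPow d n :=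
  ∑ js ∈ typicalSet n R δ, tensorPow fun i => π (js i)

/-- `B` is an `η`-shadow of the state `σ`: `0 ≤ B ≤ 1` and `Tr(σB) ≥ η`. -/
def IsShadow {ι : Type*} [Fintype ι] [DecidableEq ι] (σ B : Matrix ι ι ℂ) (η : ℝ) : Prop :=
  B.PosSemidef ∧ ((1 : Matrix ι ι ℂ) - B).PosSemidef ∧ η ≤ (Matrix.trace (σ * B)).re

/-- Average state `PW = Σ_x P(x) W_x` of a cq-channel under input distribution `P`. -/
def avgState {X : Type*} [Fintype X] {d : ℕ} (P : X → ℝ) (W : X → Mat d) : Mat d :=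
  ∑ x, (P x : ℂ) • W x

/-- Conditional von Neumann entropy `H(W|P) = Σ_x P(x) H(W_x)`. -/
def condEntropy {X : Type*} [Fintype X] {d : ℕ} (P : X → ℝ) (W : X → Mat d) : ℝ :=
  ∑ x, P x * vnEntropy (W x)

/-- Mutual information `I(P;W) = H(PW) − H(W|P)`. -/
def mutualInfo {X : Type*} [Fintype X] {d : ℕ} (P : X → ℝ) (W : X → Mat d) : ℝ :=
  vnEntropy (avgState P W) - condEntropy P W

/-- Capacity `C(W) = max_P I(P;W)`. -/
def capacity {X : Type*} [Fintype X] {d : ℕ} (W : X → Mat d) : ℝ :=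
  sSup {c | ∃ P : X → ℝ, IsProbDist P ∧ c = mutualInfo P W}

/-- `(f, D)` (with message set `M` inside the outcome index set `M'`) is an
`(n,λ)`-code for the cq-channel `W`: the `D m` are positive semidefinite, sum to the
identity, and each message is decoded correctly with probability at least `1 - λ`. -/
def IsCode {X : Type*} [Fintype X] {d n : ℕ} (W : X → Mat d) (lam : ℝ)
    {M' : Type*} [Fintype M'] (M : Finset M') (f : M' → Fin n → X)
    (D : M' → MatPow d n) : Prop :=
  (∀ m, (D m).PosSemidef) ∧ (∑ m, D m = 1) ∧
    ∀ m ∈ M, 1 - lam ≤ (Matrix.trace (tensorPow (fun i => W (f m i)) * D m)).re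

/-- `N(n,λ)`: maximal size of an `(n,λ)`-code for `W`. -/
def maxCodeSize {X : Type*} [Fintype X] (d : ℕ) (W : X → Mat d) (n : ℕ) (lam : ℝ) : ℕ :=
  sSup {k | ∃ (M' : Type) (_ : Fintype M') (M : Finset M') (f : M' → Fin n → X)
    (D : M' → MatPow d n), IsCode W lam M f D ∧ M.card = k}

/-- Trace norm `‖A‖₁ = Tr|A|`: the sum of the singular values. -/
def traceNorm {ι : Type*} [Fintype ι] [DecidableEq ι] (A : Matrix ι ι ℂ) : ℝ :=
  ∑ i, Real.sqrt ((Matrix.posSemidef_conjTranspose_mul_self A).1.eigenvalues i)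

/-- Trace distance `D(ρ,σ) = ½‖ρ−σ‖₁`. -/
def traceDist {ι : Type*} [Fintype ι] [DecidableEq ι] (ρ σ : Matrix ι ι ℂ) : ℝ :=
  traceNorm (ρ - σ) / 2

/-- (Pure-state) fidelity `F(ρ,σ) = Tr(ρσ)`. -/
def fidelity {ι : Type*} [Fintype ι] [DecidableEq ι] (ρ σ : Matrix ι ι ℂ) : ℝ :=
  (Matrix.trace (ρ * σ)).re

/-- A pure state: the rank-one orthogonal projector `|ψ⟩⟨ψ|` onto the span of a
unit vector `ψ`. -/
def IsPureState {ι : Type*} [Fintype ι] (ρ : Matrix ι ι ℂ) : Prop :=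
  ∃ ψ : ι → ℂ, (∑ i, star (ψ i) * ψ i) = 1 ∧ ρ = Matrix.vecMulVec ψ (star ψ)

/-- The set of eigenvalue-index sequences `js` that are variance-typical, with
constant `δ`, for the distribution `q x` on each block `I_x = {i : xs i = x}`. -/
def condTypicalSet {X : Type*} [Fintype X] {n d : ℕ} (xs : Fin n → X)
    (q : X → Fin d → ℝ) (δ : ℝ) : Finset (Fin n → Fin d) :=
  Finset.univ.filter fun js => ∀ (x : X) (k : Fin d),
    |((Finset.univ.filter fun i => xs i = x ∧ js i = k).card : ℝ) - (countIn x xs : ℝ) * q x k|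
      ≤ δ * Real.sqrt (countIn x xs) * Real.sqrt (q x k * (1 - q x k))

/-- Conditional variance-typical projector `Π^n_{W,δ}(x^n) = ⊗_{x∈X} Π^{I_x}_{W_x,δ}`,
with respect to fixed diagonalizations `W_x = Σ_j (q x j) • (π x j)`. -/
def condTypicalProj {X : Type*} [Fintype X] {d : ℕ} {n : ℕ} (xs : Fin n → X)
    (q : X → Fin d → ℝ) (π : X → Fin d → Mat d) (δ : ℝ) : MatPow d n :=
  ∑ js ∈ condTypicalSet xs q δ, tensorPow fun i => π (xs i) (js i)

-- ===== auxiliary lemmas =====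


lemma log_le_div_e {v : ℝ} (hv : 0 < v) : Real.log v ≤ v / Real.exp 1 := by
  have h := Real.log_le_sub_one_of_pos (show (0:ℝ) < v / Real.exp 1 from
    div_pos hv (Real.exp_pos 1))
  have h2 : Real.log (v / Real.exp 1) = Real.log v - 1 := by
    rw [Real.log_div hv.ne' (Real.exp_pos 1).ne', Real.log_exp]
  linarith

lemma sqrt_neg_log_le {p : ℝ} (hp : 0 < p) : Real.sqrt p * (-Real.log p) ≤ 2 / Real.exp 1 := by
  have hs0 : 0 < Real.sqrt p := Real.sqrt_pos.2 hp
  have h1 : Real.log (Real.sqrt p)⁻¹ ≤ (Real.sqrt p)⁻¹ / Real.exp 1 :=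
    log_le_div_e (by positivity)
  have h2 : -Real.log p = 2 * Real.log (Real.sqrt p)⁻¹ := by
    rw [Real.log_inv, Real.log_sqrt hp.le]; ring
  rw [h2]
  calc Real.sqrt p * (2 * Real.log (Real.sqrt p)⁻¹)
      ≤ Real.sqrt p * (2 * ((Real.sqrt p)⁻¹ / Real.exp 1)) := by
        apply mul_le_mul_of_nonneg_left (by linarith) hs0.le
    _ = 2 / Real.exp 1 := by field_simp

lemma Kconst_eq : Kconst = 2 / (Real.exp 1 * Real.log 2) := by
  rw [Kconst, Real.logb, Real.log_exp]
  field_simp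

lemma Kconst_pos : 0 < Kconst := by
  rw [Kconst_eq]
  have := Real.log_pos one_lt_two
  positivity

lemma sqrt_abs_logb_le {p : ℝ} (hp : 0 ≤ p) (hp1 : p ≤ 1) :
    Real.sqrt (p * (1 - p)) * |Real.logb 2 p| ≤ Kconst := by
  rcases eq_or_lt_of_le hp with h0 | h0
  · simp [← h0, Kconst_pos.le]
  · have hlog2 : (0:ℝ) < Real.log 2 := Real.log_pos one_lt_two
    have habs : |Real.logb 2 p| = (-Real.log p) / Real.log 2 := by
      rw [Real.logb, abs_div, abs_of_pos hlog2, abs_of_nonpos (Real.log_nonpos hp hp1)]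
    have hsq : Real.sqrt (p * (1 - p)) ≤ Real.sqrt p := by
      apply Real.sqrt_le_sqrt
      nlinarith
    rw [habs, Kconst_eq]
    have hmain := sqrt_neg_log_le h0
    have hnl : 0 ≤ -Real.log p := by
      have := Real.log_nonpos hp hp1; linarith
    calc Real.sqrt (p * (1-p)) * ((-Real.log p) / Real.log 2)
        ≤ Real.sqrt p * ((-Real.log p) / Real.log 2) := by
          apply mul_le_mul_of_nonneg_right hsq (by positivity)
      _ = (Real.sqrt p * (-Real.log p)) / Real.log 2 := by ring
      _ ≤ (2 / Real.exp 1) / Real.log 2 := by gcongr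
      _ = 2 / (Real.exp 1 * Real.log 2) := by field_simp

-- ===== product measure lemmas =====

lemma sum_prod_eq {X : Type} [Fintype X] {n : ℕ} (h : Fin n → X → ℝ) :
    ∑ xs : Fin n → X, ∏ j, h j (xs j) = ∏ j, ∑ y, h j y := by
  rw [show (Finset.univ : Finset (Fin n → X)) = Fintype.piFinset (fun _ => univ) from
    Fintype.piFinset_univ.symm, ← Finset.prod_univ_sum]

lemma prod_split_one {β : Type*} [CommMonoid β] {n : ℕ} (i : Fin n) (g : Fin n → β) :
    ∏ j, g j = g i * ∏ j ∈ univ.erase i, g j :=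
  (Finset.mul_prod_erase univ g (mem_univ i)).symm

lemma prod_split_two {β : Type*} [CommMonoid β] {n : ℕ} {i i' : Fin n} (hne : i ≠ i')
    (g : Fin n → β) :
    ∏ j, g j = g i * g i' * ∏ j ∈ (univ.erase i).erase i', g j := by
  rw [prod_split_one i g, ← Finset.mul_prod_erase (univ.erase i) g
    (Finset.mem_erase.2 ⟨hne.symm, mem_univ i'⟩), mul_assoc]

lemma sum_mu_one {X : Type} [Fintype X] {n : ℕ} {P : X → ℝ} (hP1 : ∑ y, P y = 1)
    (i : Fin n) (f : X → ℝ) :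
    ∑ xs : Fin n → X, (∏ j, P (xs j)) * f (xs i) = ∑ y, P y * f y := by
  set h : Fin n → X → ℝ := Function.update (fun _ : Fin n => P) i (fun y => P y * f y) with hh
  have key : ∀ xs : Fin n → X, (∏ j, P (xs j)) * f (xs i) = ∏ j, h j (xs j) := by
    intro xs
    rw [prod_split_one i (fun j => h j (xs j)), prod_split_one i (fun j => P (xs j))]
    have h1 : h i = fun y => P y * f y := Function.update_self _ _ _
    have h2 : ∀ j ∈ univ.erase i, h j (xs j) = P (xs j) := fun j hj => by
      rw [hh, Function.update_of_ne (Finset.ne_of_mem_erase hj)]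
    rw [h1, Finset.prod_congr rfl h2]
    ring
  simp_rw [key]
  rw [sum_prod_eq, prod_split_one i (fun j => ∑ y, h j y)]
  have h1 : h i = fun y => P y * f y := Function.update_self _ _ _
  have h2 : ∀ j ∈ univ.erase i, (∑ y, h j y) = 1 := fun j hj => by
    rw [hh]
    simp only [Function.update_of_ne (Finset.ne_of_mem_erase hj)]
    exact hP1
  rw [h1, Finset.prod_congr rfl h2, Finset.prod_const_one, mul_one]

lemma sum_mu_two {X : Type} [Fintype X] {n : ℕ} {P : X → ℝ} (hP1 : ∑ y, P y = 1)
    {i i' : Fin n} (hne : i ≠ i') (f g : X → ℝ) :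
    ∑ xs : Fin n → X, (∏ j, P (xs j)) * (f (xs i) * g (xs i'))
      = (∑ y, P y * f y) * (∑ y, P y * g y) := by
  set h : Fin n → X → ℝ :=
    Function.update (Function.update (fun _ : Fin n => P) i (fun y => P y * f y)) i'
      (fun y => P y * g y) with hh
  have h1 : h i' = fun y => P y * g y := Function.update_self _ _ _
  have h2 : h i = fun y => P y * f y := by
    rw [hh, Function.update_of_ne hne, Function.update_self]
  have h3 : ∀ j ∈ (univ.erase i).erase i', h j = P := fun j hj => by
    have hji' : j ≠ i' := Finset.ne_of_mem_erase hj
    have hji : j ≠ i := Finset.ne_of_mem_erase (Finset.mem_of_mem_erase hj)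
    rw [hh, Function.update_of_ne hji', Function.update_of_ne hji]
  have key : ∀ xs : Fin n → X,
      (∏ j, P (xs j)) * (f (xs i) * g (xs i')) = ∏ j, h j (xs j) := by
    intro xs
    rw [prod_split_two hne (fun j => h j (xs j)), prod_split_two hne (fun j => P (xs j))]
    have h4 : ∏ j ∈ (univ.erase i).erase i', h j (xs j)
        = ∏ j ∈ (univ.erase i).erase i', P (xs j) :=
      Finset.prod_congr rfl (fun j hj => congrFun (h3 j hj) (xs j))
    rw [h1, h2, h4]
    ring
  simp_rw [key]
  rw [sum_prod_eq, prod_split_two hne (fun j => ∑ y, h j y), h1, h2,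
    Finset.prod_congr rfl (fun j hj => show (∑ y, h j y) = 1 by rw [h3 j hj]; exact hP1),
    Finset.prod_const_one, mul_one]

lemma sum_mu_univ {X : Type} [Fintype X] {n : ℕ} {P : X → ℝ} (hP1 : ∑ y, P y = 1) :
    ∑ xs : Fin n → X, (∏ j, P (xs j)) = 1 := by
  rw [sum_prod_eq (fun _ y => P y)]
  simp [hP1]

-- ===== variance / Chebyshev =====

lemma countIn_cast {X : Type} [Fintype X] {n : ℕ} (x : X) (xs : Fin n → X) :
    (countIn x xs : ℝ) = ∑ i, (if xs i = x then (1:ℝ) else 0) := by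
  rw [countIn, Finset.card_filter]
  push_cast
  exact Finset.sum_congr rfl (fun i _ => by split <;> simp)

lemma sum_mu_var {X : Type} [Fintype X] {n : ℕ} {P : X → ℝ} (hP : IsProbDist P) (x : X) :
    ∑ xs : Fin n → X, (∏ j, P (xs j)) * ((countIn x xs : ℝ) - n * P x)^2
      = n * P x * (1 - P x) := by
  set b : X → ℝ := fun y => if y = x then (1:ℝ) else 0 with hb
  have hsumb : ∑ y, P y * b y = P x := by
    rw [hb]
    simp only [mul_ite, mul_one, mul_zero]
    rw [Finset.sum_ite_eq' univ x P]
    simp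
  have hZ0 : ∑ y, P y * (b y - P x) = 0 := by
    have : ∀ y, P y * (b y - P x) = P y * b y - P x * P y := fun y => by ring
    simp_rw [this, Finset.sum_sub_distrib, hsumb, ← Finset.mul_sum, hP.2, mul_one, sub_self]
  have hZ2 : ∑ y, P y * ((b y - P x) * (b y - P x)) = P x * (1 - P x) := by
    have hbb : ∀ y, P y * ((b y - P x) * (b y - P x))
        = (P y * b y) * (1 - 2 * P x) + P x ^ 2 * P y := by
      intro y
      rcases eq_or_ne y x with rfl | hy
      · simp only [hb, if_pos rfl]; ring
      · simp only [hb, if_neg hy]; ring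
    simp_rw [hbb, Finset.sum_add_distrib, ← Finset.sum_mul, ← Finset.mul_sum, hsumb, hP.2]
    ring
  have hcount : ∀ xs : Fin n → X, (countIn x xs : ℝ) - n * P x = ∑ i, (b (xs i) - P x) := by
    intro xs
    rw [Finset.sum_sub_distrib, Finset.sum_const, countIn_cast]
    simp [hb, mul_comm]
  have hsq : ∀ xs : Fin n → X, ((countIn x xs : ℝ) - n * P x)^2
      = ∑ i, ∑ i', (b (xs i) - P x) * (b (xs i') - P x) := by
    intro xs
    rw [hcount, sq, Finset.sum_mul_sum]
  simp_rw [hsq, Finset.mul_sum]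
  rw [Finset.sum_comm]
  have hinner : ∀ i : Fin n, ∑ xs : Fin n → X,
      ∑ i', (∏ j, P (xs j)) * ((b (xs i) - P x) * (b (xs i') - P x))
      = P x * (1 - P x) := by
    intro i
    rw [Finset.sum_comm]
    have : ∀ i' : Fin n, ∑ xs : Fin n → X,
        (∏ j, P (xs j)) * ((b (xs i) - P x) * (b (xs i') - P x))
        = if i = i' then P x * (1 - P x) else 0 := by
      intro i'
      rcases eq_or_ne i i' with rfl | hne
      · rw [if_pos rfl, ← hZ2]
        have := sum_mu_one hP.2 i (fun y => (b y - P x) * (b y - P x))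
        exact this
      · rw [if_neg hne, sum_mu_two hP.2 hne (fun y => b y - P x) (fun y => b y - P x), hZ0]
        ring
    simp_rw [this]
    simp
  simp_rw [hinner]
  rw [Finset.sum_const]
  simp [mul_assoc]

lemma prob_dist_le_one {X : Type} [Fintype X] {P : X → ℝ} (hP : IsProbDist P) (x : X) :
    P x ≤ 1 := by
  rw [← hP.2]
  exact Finset.single_le_sum (fun y _ => hP.1 y) (mem_univ x)

lemma cheb {X : Type} [Fintype X] {n : ℕ} {P : X → ℝ} (hP : IsProbDist P)
    (hn : 0 < n) {δ : ℝ} (hδ : 0 < δ) (x : X) :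
    ∑ xs ∈ univ.filter (fun xs : Fin n → X =>
        ¬ |(countIn x xs : ℝ) - n * P x| ≤ δ * Real.sqrt n * Real.sqrt (P x * (1 - P x))),
      (∏ j, P (xs j)) ≤ 1 / δ^2 := by
  have hp0 := hP.1 x
  have hp1 := prob_dist_le_one hP x
  have hpq : (0:ℝ) ≤ P x * (1 - P x) := by nlinarith
  have hthr : (δ * Real.sqrt n * Real.sqrt (P x * (1 - P x)))^2
      = δ^2 * ((n:ℝ) * (P x * (1 - P x))) := by
    rw [mul_pow, mul_pow, Real.sq_sqrt (Nat.cast_nonneg n), Real.sq_sqrt hpq]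
    ring
  have hμ : ∀ xs : Fin n → X, (0:ℝ) ≤ ∏ j, P (xs j) :=
    fun xs => Finset.prod_nonneg (fun j _ => hP.1 _)
  set bad := univ.filter (fun xs : Fin n → X =>
      ¬ |(countIn x xs : ℝ) - n * P x| ≤ δ * Real.sqrt n * Real.sqrt (P x * (1 - P x))) with hbad
  have hkey : ∀ xs ∈ bad, δ^2 * ((n:ℝ) * (P x * (1 - P x)))
      ≤ ((countIn x xs : ℝ) - n * P x)^2 := by
    intro xs hxs
    rw [hbad, Finset.mem_filter] at hxs
    have h := lt_of_not_ge hxs.2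
    have hthr0 : 0 ≤ δ * Real.sqrt n * Real.sqrt (P x * (1 - P x)) := by positivity
    rw [← hthr, ← sq_abs ((countIn x xs : ℝ) - n * P x)]
    exact pow_le_pow_left₀ hthr0 h.le 2
  have hsumall : ∑ xs ∈ bad, (∏ j, P (xs j)) * ((countIn x xs : ℝ) - n * P x)^2
      ≤ (n:ℝ) * (P x * (1 - P x)) := by
    calc ∑ xs ∈ bad, (∏ j, P (xs j)) * ((countIn x xs : ℝ) - n * P x)^2
        ≤ ∑ xs : Fin n → X, (∏ j, P (xs j)) * ((countIn x xs : ℝ) - n * P x)^2 := by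
          apply Finset.sum_le_sum_of_subset_of_nonneg (Finset.filter_subset _ _)
          intro xs _ _
          exact mul_nonneg (hμ xs) (sq_nonneg _)
      _ = (n:ℝ) * (P x * (1 - P x)) := by rw [sum_mu_var hP x]; ring
  rcases eq_or_lt_of_le hpq with hq0 | hq0
  · -- variance zero: every bad sequence has probability zero
    have : ∀ xs ∈ bad, (∏ j, P (xs j)) = 0 := by
      intro xs hxs
      have h := hkey xs hxs
      rw [← hq0] at h hsumall
      simp only [mul_zero] at h hsumall
      have hpos : 0 < ((countIn x xs : ℝ) - n * P x)^2 := by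
        rw [hbad, Finset.mem_filter] at hxs
        have h2 := lt_of_not_ge hxs.2
        rw [← hq0, Real.sqrt_zero, mul_zero] at h2
        have : ((countIn x xs : ℝ) - n * P x) ≠ 0 := by
          intro h3; rw [h3] at h2; simp at h2
        positivity
      by_contra hne
      have hμpos : 0 < ∏ j, P (xs j) := lt_of_le_of_ne (hμ xs) (Ne.symm hne)
      have : 0 < ∑ xs ∈ bad, (∏ j, P (xs j)) * ((countIn x xs : ℝ) - n * P x)^2 := by
        refine Finset.sum_pos' (fun ys _ => mul_nonneg (hμ ys) (sq_nonneg _))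
          ⟨xs, hxs, mul_pos hμpos hpos⟩
      linarith
    rw [Finset.sum_eq_zero this]
    positivity
  · -- Chebyshev
    have hstep : δ^2 * ((n:ℝ) * (P x * (1 - P x))) * ∑ xs ∈ bad, (∏ j, P (xs j))
        ≤ (n:ℝ) * (P x * (1 - P x)) := by
      rw [Finset.mul_sum]
      refine le_trans (Finset.sum_le_sum ?_) hsumall
      intro xs hxs
      rw [mul_comm]
      exact mul_le_mul_of_nonneg_left (hkey xs hxs) (hμ xs)
    have hV : (0:ℝ) < (n:ℝ) * (P x * (1 - P x)) := by
      have : (0:ℝ) < (n:ℝ) := Nat.cast_pos.2 hn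
      nlinarith
    rw [div_eq_inv_mul, ← mul_le_mul_iff_right₀ (by positivity : (0:ℝ) < δ^2)]
    calc δ^2 * ∑ xs ∈ bad, (∏ j, P (xs j))
        = (δ^2 * ((n:ℝ) * (P x * (1 - P x))) * ∑ xs ∈ bad, (∏ j, P (xs j)))
          / ((n:ℝ) * (P x * (1 - P x))) := by rw [mul_div_right_comm, mul_div_cancel_right₀ _ hV.ne']
      _ ≤ ((n:ℝ) * (P x * (1 - P x))) / ((n:ℝ) * (P x * (1 - P x))) := by gcongr
      _ = δ^2 * ((δ^2)⁻¹ * 1) := by rw [div_self hV.ne', mul_one, mul_inv_cancel₀ (by positivity)]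

-- ===== probability of typical set =====

lemma prob_typical_ge {X : Type} [Fintype X] {n : ℕ} {P : X → ℝ} (hP : IsProbDist P)
    (hn : 0 < n) {δ : ℝ} (hδ : 0 < δ) :
    1 - (Fintype.card X : ℝ) / δ^2 ≤ ∑ xs ∈ typicalSet n P δ, ∏ j, P (xs j) := by
  have hμ : ∀ xs : Fin n → X, (0:ℝ) ≤ ∏ j, P (xs j) :=
    fun xs => Finset.prod_nonneg (fun j _ => hP.1 _)
  have hsplit := Finset.sum_filter_add_sum_filter_not univ
    (fun xs : Fin n → X => ∀ x : X,
      |(countIn x xs : ℝ) - n * P x| ≤ δ * Real.sqrt n * Real.sqrt (P x * (1 - P x)))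
    (fun xs => ∏ j, P (xs j))
  have htot : ∑ xs : Fin n → X, (∏ j, P (xs j)) = 1 := sum_mu_univ hP.2
  -- bound the complement
  set compl := univ.filter (fun xs : Fin n → X => ¬ ∀ x : X,
      |(countIn x xs : ℝ) - n * P x| ≤ δ * Real.sqrt n * Real.sqrt (P x * (1 - P x))) with hcompl
  have hbound : ∑ xs ∈ compl, (∏ j, P (xs j)) ≤ (Fintype.card X : ℝ) / δ^2 := by
    have step1 : ∑ xs ∈ compl, (∏ j, P (xs j))
        ≤ ∑ xs ∈ compl, ∑ x : X, (if ¬ |(countIn x xs : ℝ) - n * P x|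
            ≤ δ * Real.sqrt n * Real.sqrt (P x * (1 - P x)) then (∏ j, P (xs j)) else 0) := by
      apply Finset.sum_le_sum
      intro xs hxs
      rw [hcompl, Finset.mem_filter] at hxs
      push_neg at hxs
      obtain ⟨x₀, hx₀⟩ := hxs.2
      have := Finset.single_le_sum (f := fun x : X => (if ¬ |(countIn x xs : ℝ) - n * P x|
          ≤ δ * Real.sqrt n * Real.sqrt (P x * (1 - P x)) then (∏ j, P (xs j)) else 0))
        (fun x _ => by split <;> [exact hμ xs; exact le_rfl]) (mem_univ x₀)
      rw [if_pos (not_le.2 hx₀)] at this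
      exact this
    have step2 : ∑ xs ∈ compl, ∑ x : X, (if ¬ |(countIn x xs : ℝ) - n * P x|
          ≤ δ * Real.sqrt n * Real.sqrt (P x * (1 - P x)) then (∏ j, P (xs j)) else 0)
        ≤ ∑ x : X, (1 / δ^2 : ℝ) := by
      rw [Finset.sum_comm]
      apply Finset.sum_le_sum
      intro x _
      calc ∑ xs ∈ compl, (if ¬ |(countIn x xs : ℝ) - n * P x|
              ≤ δ * Real.sqrt n * Real.sqrt (P x * (1 - P x)) then (∏ j, P (xs j)) else 0)
          ≤ ∑ xs : Fin n → X, (if ¬ |(countIn x xs : ℝ) - n * P x|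
              ≤ δ * Real.sqrt n * Real.sqrt (P x * (1 - P x)) then (∏ j, P (xs j)) else 0) := by
            apply Finset.sum_le_sum_of_subset_of_nonneg (Finset.filter_subset _ _)
            intro xs _ _
            split <;> [exact hμ xs; exact le_rfl]
        _ = ∑ xs ∈ univ.filter (fun xs : Fin n → X => ¬ |(countIn x xs : ℝ) - n * P x|
              ≤ δ * Real.sqrt n * Real.sqrt (P x * (1 - P x))), (∏ j, P (xs j)) :=
            (Finset.sum_filter _ _).symm
        _ ≤ 1 / δ^2 := cheb hP hn hδ x
    calc ∑ xs ∈ compl, (∏ j, P (xs j)) ≤ ∑ x : X, (1 / δ^2 : ℝ) := step1.trans step2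
      _ = (Fintype.card X : ℝ) / δ^2 := by
        rw [Finset.sum_const, Finset.card_univ, nsmul_eq_mul]
        ring
  rw [typicalSet]
  linarith [hsplit, htot, hbound]

-- ===== entropy bounds =====

lemma exp2_pos (t : ℝ) : 0 < exp2 t := Real.rpow_pos_of_pos two_pos t

lemma exp2_le_exp2 {s t : ℝ} (h : s ≤ t) : exp2 s ≤ exp2 t :=
  Real.rpow_le_rpow_of_exponent_le one_le_two h

lemma exp2_add (s t : ℝ) : exp2 (s + t) = exp2 s * exp2 t :=
  Real.rpow_add two_pos s t

lemma exp2_neg (t : ℝ) : exp2 (-t) = (exp2 t)⁻¹ := Real.rpow_neg (by norm_num) t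

lemma prod_eq_prod_pow {X : Type} [Fintype X] {n : ℕ} (P : X → ℝ) (xs : Fin n → X) :
    ∏ j, P (xs j) = ∏ x, P x ^ countIn x xs := by
  rw [← Finset.prod_fiberwise_of_maps_to (g := xs) (t := univ)
    (fun i _ => mem_univ (xs i)) (fun i => P (xs i))]
  apply Finset.prod_congr rfl
  intro x _
  rw [countIn, ← Finset.prod_const]
  apply Finset.prod_congr rfl
  intro i hi
  rw [(Finset.mem_filter.1 hi).2]

lemma mu_typical_bounds {X : Type} [Fintype X] {n : ℕ} {P : X → ℝ} (hP : IsProbDist P)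
    {δ : ℝ} (hδ : 0 < δ) {xs : Fin n → X} (hxs : xs ∈ typicalSet n P δ) :
    exp2 (-((n : ℝ) * shannonEntropy P + Kconst * (Fintype.card X) * δ * Real.sqrt n))
      ≤ ∏ j, P (xs j) ∧
    ∏ j, P (xs j)
      ≤ exp2 (-((n : ℝ) * shannonEntropy P - Kconst * (Fintype.card X) * δ * Real.sqrt n)) := by
  rw [typicalSet, Finset.mem_filter] at hxs
  have htyp := hxs.2
  -- if P x = 0 then countIn x xs = 0
  have hzero : ∀ x : X, P x = 0 → countIn x xs = 0 := by
    intro x hx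
    have h := htyp x
    rw [hx] at h
    simp only [mul_zero, zero_mul, Real.sqrt_zero, zero_sub, mul_zero, abs_le] at h
    have h1 : (countIn x xs : ℝ) ≤ 0 := by linarith [h.2]
    exact_mod_cast le_antisymm h1 (Nat.cast_nonneg _)
  -- ∏ = exp2 (∑ x, N x * logb 2 (P x))
  have hrepr : ∏ j, P (xs j) = exp2 (∑ x, (countIn x xs : ℝ) * Real.logb 2 (P x)) := by
    rw [prod_eq_prod_pow P xs, exp2, Real.rpow_sum_of_pos two_pos]
    apply Finset.prod_congr rfl
    intro x _
    rcases eq_or_lt_of_le (hP.1 x) with h0 | h0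
    · rw [hzero x h0.symm, ← h0]
      simp
    · rw [mul_comm, Real.rpow_mul (by norm_num : (0:ℝ) ≤ 2), Real.rpow_logb two_pos
        (by norm_num) h0, Real.rpow_natCast]
  -- the exponent is close to -nH
  have hexp : |(∑ x, (countIn x xs : ℝ) * Real.logb 2 (P x))
      - (-((n:ℝ) * shannonEntropy P))|
      ≤ Kconst * (Fintype.card X) * δ * Real.sqrt n := by
    have hHrw : -((n:ℝ) * shannonEntropy P) = ∑ x, ((n:ℝ) * P x) * Real.logb 2 (P x) := by
      rw [shannonEntropy, mul_neg, neg_neg, Finset.mul_sum]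
      apply Finset.sum_congr rfl
      intro x _
      ring
    rw [hHrw, ← Finset.sum_sub_distrib]
    calc |∑ x, ((countIn x xs : ℝ) * Real.logb 2 (P x) - ((n:ℝ) * P x) * Real.logb 2 (P x))|
        ≤ ∑ x, |(countIn x xs : ℝ) * Real.logb 2 (P x) - ((n:ℝ) * P x) * Real.logb 2 (P x)| :=
          Finset.abs_sum_le_sum_abs _ _
      _ ≤ ∑ _x : X, Kconst * δ * Real.sqrt n := by
          apply Finset.sum_le_sum
          intro x _
          have : (countIn x xs : ℝ) * Real.logb 2 (P x) - ((n:ℝ) * P x) * Real.logb 2 (P x)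
              = ((countIn x xs : ℝ) - (n:ℝ) * P x) * Real.logb 2 (P x) := by ring
          rw [this, abs_mul]
          calc |(countIn x xs : ℝ) - (n:ℝ) * P x| * |Real.logb 2 (P x)|
              ≤ (δ * Real.sqrt n * Real.sqrt (P x * (1 - P x))) * |Real.logb 2 (P x)| :=
                mul_le_mul_of_nonneg_right (htyp x) (abs_nonneg _)
            _ = (δ * Real.sqrt n) * (Real.sqrt (P x * (1 - P x)) * |Real.logb 2 (P x)|) := by
                ring
            _ ≤ (δ * Real.sqrt n) * Kconst := by
                apply mul_le_mul_of_nonneg_left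
                  (sqrt_abs_logb_le (hP.1 x) (prob_dist_le_one hP x)) (by positivity)
            _ = Kconst * δ * Real.sqrt n := by ring
      _ = Kconst * (Fintype.card X) * δ * Real.sqrt n := by
          rw [Finset.sum_const, Finset.card_univ, nsmul_eq_mul]
          ring
  rw [hrepr]
  rw [abs_le] at hexp
  constructor
  · apply exp2_le_exp2
    linarith [hexp.1]
  · apply exp2_le_exp2
    linarith [hexp.2]


/-- **Lemma 1, part 3 (Typical sequences, cardinality).**
`|T^n_{P,δ}| ≤ exp₂(nH(P) + Kaδ√n)` and
`|T^n_{P,δ}| ≥ (1 − a/δ²) exp₂(nH(P) − Kaδ√n)`, with `K = 2 log₂(e)/e`. -/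
theorem typicalSet_card {X : Type} [Fintype X] (P : X → ℝ) (hP : IsProbDist P)
    (n : ℕ) (hn : 0 < n) (δ : ℝ) (hδ : 0 < δ) :
    ((typicalSet n P δ).card : ℝ)
        ≤ exp2 ((n : ℝ) * shannonEntropy P + Kconst * (Fintype.card X) * δ * Real.sqrt n) ∧
      (1 - (Fintype.card X : ℝ) / δ ^ 2) *
          exp2 ((n : ℝ) * shannonEntropy P - Kconst * (Fintype.card X) * δ * Real.sqrt n)
        ≤ ((typicalSet n P δ).card : ℝ) := by
  set Sp := (n : ℝ) * shannonEntropy P + Kconst * (Fintype.card X) * δ * Real.sqrt n with hSp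
  set Sm := (n : ℝ) * shannonEntropy P - Kconst * (Fintype.card X) * δ * Real.sqrt n with hSm
  have hμ : ∀ xs : Fin n → X, (0:ℝ) ≤ ∏ j, P (xs j) :=
    fun xs => Finset.prod_nonneg (fun j _ => hP.1 _)
  constructor
  · -- upper bound
    have h1 : (typicalSet n P δ).card • exp2 (-Sp)
        ≤ ∑ xs ∈ typicalSet n P δ, ∏ j, P (xs j) :=
      Finset.card_nsmul_le_sum _ _ _ (fun xs hxs => (mu_typical_bounds hP hδ hxs).1)
    have h2 : ∑ xs ∈ typicalSet n P δ, (∏ j, P (xs j)) ≤ 1 := by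
      rw [← sum_mu_univ (n := n) hP.2]
      exact Finset.sum_le_sum_of_subset_of_nonneg (Finset.subset_univ _)
        (fun xs _ _ => hμ xs)
    rw [nsmul_eq_mul, exp2_neg, ← div_eq_mul_inv] at h1
    exact (div_le_one (exp2_pos Sp)).1 (h1.trans h2)
  · -- lower bound
    have h1 : ∑ xs ∈ typicalSet n P δ, (∏ j, P (xs j))
        ≤ (typicalSet n P δ).card • exp2 (-Sm) :=
      Finset.sum_le_card_nsmul _ _ _ (fun xs hxs => (mu_typical_bounds hP hδ hxs).2)
    have h2 := prob_typical_ge hP hn hδ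
    rw [nsmul_eq_mul, exp2_neg, ← div_eq_mul_inv] at h1
    exact (le_div_iff₀ (exp2_pos Sm)).1 (h2.trans h1)
end
end

section
/- Let Λ be an operator with 0 ≤ Λ ≤ 1 on a finite-dimensional Hilbert space and ρ a density operator commuting with Λ, such that for some λ, μ₁, μ₂ > 0 one has Tr(ρΛ) ≥ 1 − λ and μ₁Λ ≤ √Λ ρ √Λ ≤ μ₂Λ (in the positive semidefinite order). Then (1−λ)/μ₂ ≤ Tr Λ ≤ 1/μ₁, and every η-shadow B of ρ satisfies Tr B ≥ (η − λ)/μ₂. -/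
open Matrix BigOperators Finset
open scoped Classical ComplexOrder

noncomputable section

/-- The positive semidefinite square root, as `Matrix.PosSemidef.sqrt` was defined in the
older Mathlib (removed since). -/
def Matrix.PosSemidef.sqrt {n 𝕜 : Type*} [Fintype n] [RCLike 𝕜] [DecidableEq n]
    {A : Matrix n n 𝕜} (hA : A.PosSemidef) : Matrix n n 𝕜 :=
  hA.1.eigenvectorUnitary.1 * diagonal ((↑) ∘ Real.sqrt ∘ hA.1.eigenvalues) *
    (star hA.1.eigenvectorUnitary : Matrix n n 𝕜)


section ShadowHelpers

variable {ι : Type*} [Fintype ι] [DecidableEq ι]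

lemma Matrix.PosSemidef.posSemidef_sqrt {A : Matrix ι ι ℂ} (hA : A.PosSemidef) :
    hA.sqrt.PosSemidef := by
  unfold Matrix.PosSemidef.sqrt
  have hD : (diagonal ((↑) ∘ Real.sqrt ∘ hA.1.eigenvalues) : Matrix ι ι ℂ).PosSemidef :=
    PosSemidef.diagonal (fun i => by
      simpa using Complex.zero_le_real.mpr (Real.sqrt_nonneg (hA.1.eigenvalues i)))
  have := hD.mul_mul_conjTranspose_same (hA.1.eigenvectorUnitary : Matrix ι ι ℂ)
  simpa [Matrix.star_eq_conjTranspose] using this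

lemma Matrix.PosSemidef.sqrt_mul_self {A : Matrix ι ι ℂ} (hA : A.PosSemidef) :
    hA.sqrt * hA.sqrt = A := by
  unfold Matrix.PosSemidef.sqrt
  set U : Matrix ι ι ℂ := (hA.1.eigenvectorUnitary : Matrix ι ι ℂ) with hUdef
  have hU2 : star U * U = 1 := (Matrix.mem_unitaryGroup_iff').mp hA.1.eigenvectorUnitary.2
  have hspec := hA.1.spectral_theorem
  rw [Unitary.conjStarAlgAut_apply] at hspec
  calc U * diagonal ((↑) ∘ Real.sqrt ∘ hA.1.eigenvalues) * star U *
        (U * diagonal ((↑) ∘ Real.sqrt ∘ hA.1.eigenvalues) * star U)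
      = U * (diagonal ((↑) ∘ Real.sqrt ∘ hA.1.eigenvalues) *
          diagonal ((↑) ∘ Real.sqrt ∘ hA.1.eigenvalues)) * star U := by
        simp only [mul_assoc]; rw [← mul_assoc (star U) U, hU2, one_mul]
    _ = U * diagonal (RCLike.ofReal ∘ hA.1.eigenvalues) * star U := by
        rw [diagonal_mul_diagonal]
        congr 3
        funext i
        simp only [Function.comp_apply]
        rw [← Complex.ofReal_mul, Real.mul_self_sqrt (hA.eigenvalues_nonneg i)]
        rfl
    _ = A := hspec.symm

lemma trace_re_nonneg' {A : Matrix ι ι ℂ} (hA : A.PosSemidef) :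
    0 ≤ (Matrix.trace A).re := by
  rw [Matrix.trace]
  have : ∀ i, 0 ≤ (A i i).re := by
    intro i
    have h := hA.dotProduct_mulVec_nonneg (Pi.single i 1)
    have heq : star (Pi.single i 1 : ι → ℂ) ⬝ᵥ (A *ᵥ Pi.single i 1) = A i i := by
      simp [dotProduct, mulVec, Pi.single_apply]
    rw [heq] at h
    simpa using (Complex.le_def.mp h).1
  simpa [Matrix.diag] using Finset.sum_nonneg fun i _ => this i

lemma trace_mul_re_nonneg' {A B : Matrix ι ι ℂ} (hA : A.PosSemidef) (hB : B.PosSemidef) :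
    0 ≤ (Matrix.trace (A * B)).re := by
  have h1 : A * B = hA.sqrt * (hA.sqrt * B) := by
    rw [← mul_assoc, hA.sqrt_mul_self]
  have h2 : Matrix.trace (A * B) = Matrix.trace (hA.sqrt * B * hA.sqrt) := by
    rw [h1, Matrix.trace_mul_comm, mul_assoc]
  have h3 : (hA.sqrt * B * hA.sqrt).PosSemidef := by
    have := hB.mul_mul_conjTranspose_same hA.sqrt
    rwa [hA.posSemidef_sqrt.1] at this
  rw [h2]; exact trace_re_nonneg' h3

lemma commute_sqrt' {Λ ρ : Matrix ι ι ℂ} (hΛ : Λ.PosSemidef) (h : ρ * Λ = Λ * ρ) :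
    ρ * hΛ.sqrt = hΛ.sqrt * ρ := by
  set U : Matrix ι ι ℂ := (hΛ.1.eigenvectorUnitary : Matrix ι ι ℂ) with hUdef
  have hU1 : U * star U = 1 := (Matrix.mem_unitaryGroup_iff).mp hΛ.1.eigenvectorUnitary.2
  have hU2 : star U * U = 1 := (Matrix.mem_unitaryGroup_iff').mp hΛ.1.eigenvectorUnitary.2
  set d : ι → ℂ := RCLike.ofReal ∘ hΛ.1.eigenvalues with hd
  set e : ι → ℂ := RCLike.ofReal ∘ Real.sqrt ∘ hΛ.1.eigenvalues with he
  have hspec : star U * Λ * U = Matrix.diagonal d := by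
    have := hΛ.1.conjStarAlgAut_star_eigenvectorUnitary
    rwa [Unitary.conjStarAlgAut_star_apply] at this
  have hsqrt : hΛ.sqrt = U * Matrix.diagonal e * star U := rfl
  have conj_mul : ∀ X Y : Matrix ι ι ℂ,
      (star U * X * U) * (star U * Y * U) = star U * (X * Y) * U := by
    intro X Y
    simp only [mul_assoc]
    rw [← mul_assoc U (star U), hU1, one_mul]
  have conj_mul' : ∀ X Y : Matrix ι ι ℂ,
      (U * X * star U) * (U * Y * star U) = U * (X * Y) * star U := by
    intro X Y
    simp only [mul_assoc]
    rw [← mul_assoc (star U) U, hU2, one_mul]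
  set τ : Matrix ι ι ℂ := star U * ρ * U with hτ
  have hρU : U * τ * star U = ρ := by
    rw [hτ]
    simp only [mul_assoc]
    rw [hU1, mul_one, ← mul_assoc, hU1, one_mul]
  have hcd : τ * Matrix.diagonal d = Matrix.diagonal d * τ := by
    rw [← hspec, hτ, conj_mul, conj_mul, h]
  have hce : τ * Matrix.diagonal e = Matrix.diagonal e * τ := by
    ext i j
    have hij := congrFun (congrFun hcd i) j
    simp only [Matrix.mul_diagonal, Matrix.diagonal_mul] at hij ⊢
    by_cases hτ0 : τ i j = 0
    · simp [hτ0]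
    · have hdd : d j = d i := by
        apply mul_left_cancel₀ hτ0
        rw [hij, mul_comm]
      have hee : e i = e j := by
        have : hΛ.1.eigenvalues i = hΛ.1.eigenvalues j := by
          simpa [hd, Complex.ofReal_inj] using hdd.symm
        simp [he, this]
      rw [hee]; ring
  calc ρ * hΛ.sqrt = (U * τ * star U) * (U * Matrix.diagonal e * star U) := by
        rw [hρU, hsqrt]
    _ = U * (τ * Matrix.diagonal e) * star U := conj_mul' _ _
    _ = U * (Matrix.diagonal e * τ) * star U := by rw [hce]
    _ = (U * Matrix.diagonal e * star U) * (U * τ * star U) := (conj_mul' _ _).symm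
    _ = hΛ.sqrt * ρ := by rw [hρU, hsqrt]

lemma posSemidef_mul_of_commute' {A B : Matrix ι ι ℂ} (hA : A.PosSemidef) (hB : B.PosSemidef)
    (h : A * B = B * A) : (A * B).PosSemidef := by
  have hc : B * hA.sqrt = hA.sqrt * B := commute_sqrt' hA h.symm
  have heq : A * B = hA.sqrt * B * hA.sqrt := by
    calc A * B = hA.sqrt * (hA.sqrt * B) := by rw [← mul_assoc, hA.sqrt_mul_self]
      _ = hA.sqrt * (B * hA.sqrt) := by rw [← hc]
      _ = hA.sqrt * B * hA.sqrt := by rw [← mul_assoc]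
  rw [heq]
  have := hB.mul_mul_conjTranspose_same hA.sqrt
  rwa [hA.posSemidef_sqrt.1] at this

end ShadowHelpers

/-- **Lemma 3 (Shadow bound).** If `0 ≤ Λ ≤ 1`, `ρ` is a state commuting with `Λ`,
`Tr(ρΛ) ≥ 1 − λ` and `μ₁Λ ≤ √Λ ρ √Λ ≤ μ₂Λ`, then `(1−λ)/μ₂ ≤ Tr Λ ≤ 1/μ₁`, and
every `η`-shadow `B` of `ρ` satisfies `Tr B ≥ (η − λ)/μ₂`. -/
theorem abstract_shadow_bound {ι : Type} [Fintype ι] [DecidableEq ι]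
    (Λ ρ : Matrix ι ι ℂ) (hΛ : Λ.PosSemidef)
    (hΛ1 : ((1 : Matrix ι ι ℂ) - Λ).PosSemidef)
    (hρ : IsState ρ) (hcomm : ρ * Λ = Λ * ρ)
    (lam μ₁ μ₂ : ℝ) (hlam : 0 < lam) (hμ₁ : 0 < μ₁) (hμ₂ : 0 < μ₂)
    (htr : 1 - lam ≤ (Matrix.trace (ρ * Λ)).re)
    (hlow : (hΛ.sqrt * ρ * hΛ.sqrt - (μ₁ : ℂ) • Λ).PosSemidef)
    (hup : ((μ₂ : ℂ) • Λ - hΛ.sqrt * ρ * hΛ.sqrt).PosSemidef) :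
    ((1 - lam) / μ₂ ≤ (Matrix.trace Λ).re ∧ (Matrix.trace Λ).re ≤ 1 / μ₁) ∧
      ∀ (η : ℝ) (B : Matrix ι ι ℂ), IsShadow ρ B η →
        (η - lam) / μ₂ ≤ (Matrix.trace B).re := by
  set S : Matrix ι ι ℂ := hΛ.sqrt * ρ * hΛ.sqrt with hSdef
  have hSρΛ : S = ρ * Λ := by
    rw [hSdef, show hΛ.sqrt * ρ = ρ * hΛ.sqrt from (commute_sqrt' hΛ hcomm).symm,
      mul_assoc, hΛ.sqrt_mul_self]
  have hρ1 : (Matrix.trace ρ).re = 1 := by rw [hρ.2]; simp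
  have h_up : (Matrix.trace S).re ≤ μ₂ * (Matrix.trace Λ).re := by
    have h0 := trace_re_nonneg' hup
    rw [Matrix.trace_sub, Matrix.trace_smul, Complex.sub_re] at h0
    simp only [smul_eq_mul, Complex.re_ofReal_mul] at h0
    linarith
  have h_low : μ₁ * (Matrix.trace Λ).re ≤ (Matrix.trace S).re := by
    have h0 := trace_re_nonneg' hlow
    rw [Matrix.trace_sub, Matrix.trace_smul, Complex.sub_re] at h0
    simp only [smul_eq_mul, Complex.re_ofReal_mul] at h0
    linarith
  have htrS : 1 - lam ≤ (Matrix.trace S).re := by rw [hSρΛ]; exact htr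
  have htrS1 : (Matrix.trace S).re ≤ 1 := by
    have h0 := trace_mul_re_nonneg' hρ.1 hΛ1
    rw [mul_sub, mul_one, Matrix.trace_sub, Complex.sub_re, hSρΛ] at *
    linarith
  refine ⟨⟨?_, ?_⟩, ?_⟩
  · rw [div_le_iff₀ hμ₂]; linarith
  · rw [le_div_iff₀ hμ₁]; linarith
  · rintro η B ⟨hB, hB1, hηB⟩
    have hρS_psd : (ρ - S).PosSemidef := by
      have h1 : ρ - S = ρ * ((1 : Matrix ι ι ℂ) - Λ) := by
        rw [hSρΛ, mul_sub, mul_one]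
      have h2 : ρ * ((1 : Matrix ι ι ℂ) - Λ) = ((1 : Matrix ι ι ℂ) - Λ) * ρ := by
        rw [mul_sub, sub_mul, mul_one, one_mul, hcomm]
      rw [h1]
      exact posSemidef_mul_of_commute' hρ.1 hΛ1 h2
    have e1 : (Matrix.trace ((ρ - S) * B)).re
        = (Matrix.trace (ρ * B)).re - (Matrix.trace (S * B)).re := by
      rw [sub_mul, Matrix.trace_sub, Complex.sub_re]
    have e2 : (Matrix.trace ((ρ - S) * B)).re ≤ (Matrix.trace (ρ - S)).re := by
      have h0 := trace_mul_re_nonneg' hρS_psd hB1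
      rw [mul_sub, mul_one, Matrix.trace_sub, Complex.sub_re] at h0
      linarith
    have e3 : (Matrix.trace (ρ - S)).re ≤ lam := by
      rw [Matrix.trace_sub, Complex.sub_re, hρ1]
      linarith
    have e4 : (Matrix.trace (S * B)).re ≤ μ₂ * (Matrix.trace (Λ * B)).re := by
      have h0 := trace_mul_re_nonneg' hup hB
      rw [sub_mul, Matrix.smul_mul, Matrix.trace_sub, Matrix.trace_smul,
        Complex.sub_re] at h0
      simp only [smul_eq_mul, Complex.re_ofReal_mul] at h0
      linarith
    have e5 : (Matrix.trace (Λ * B)).re ≤ (Matrix.trace B).re := by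
      have h0 := trace_mul_re_nonneg' hΛ1 hB
      rw [sub_mul, one_mul, Matrix.trace_sub, Complex.sub_re] at h0
      linarith
    have e6 : μ₂ * (Matrix.trace (Λ * B)).re ≤ μ₂ * (Matrix.trace B).re :=
      mul_le_mul_of_nonneg_left e5 hμ₂.le
    rw [div_le_iff₀ hμ₂]
    linarith
end
end
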